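/- Let n ≥ 5 be odd. Then every basic set for S_n of minimal cardinality γ(S_n) all of whose members are maximal subgroups of S_n contains a conjugate of P_2. -/

import Mathlib

open Equiv Pointwise

/-- A basic set for `G`: a finite set of proper subgroups whose conjugates cover `G`. -/
def IsBasicSet {G : Type*} [Group G] (δ : Finset (Subgroup G)) : Prop :=
  (∀ H ∈ δ, H ≠ ⊤) ∧ ∀ g : G, ∃ H ∈ δ, ∃ k : G, k * g * k⁻¹ ∈ H

/-- The normal covering number `γ(G)`. -/
noncomputable def normalCoveringNumber (G : Type*) [Group G] : ℕ :=
  sInf {m | ∃ δ : Finset (Subgroup G), IsBasicSet δ ∧ δ.card = m}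

/-- `P x`, the setwise stabilizer of `{0, …, x-1}` in `Sₙ`. -/
def Pstab (n x : ℕ) : Subgroup (Equiv.Perm (Fin n)) :=
  MulAction.stabilizer (Equiv.Perm (Fin n)) ({a : Fin n | (a : ℕ) < x} : Set (Fin n))

private lemma conj_swap' {α : Type*} [DecidableEq α] (h : Equiv.Perm α) (x y : α) :
    h * Equiv.swap x y * h⁻¹ = Equiv.swap (h x) (h y) :=
  (Equiv.swap_apply_apply h x y).symm

/-- For odd `n ≥ 5`, every minimal basic set of `Sₙ` consisting of maximal subgroups
contains a conjugate of `P₂`. -/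
theorem minimal_basicSet_contains_Pstab_two (n : ℕ) (hn : 5 ≤ n) (hodd : Odd n)
    (δ : Finset (Subgroup (Equiv.Perm (Fin n)))) (hδ : IsBasicSet δ)
    (hcard : δ.card = normalCoveringNumber (Equiv.Perm (Fin n)))
    (hmax : ∀ H ∈ δ, IsCoatom H) :
    ∃ H ∈ δ, ∃ k : Equiv.Perm (Fin n),
      H = Subgroup.map (MulAut.conj k).toMonoidHom (Pstab n 2) := by
  classical
  haveI : NeZero n := ⟨by omega⟩
  set m := n - 2 with hmdef
  have hm3 : 3 ≤ m := by omega
  haveI : NeZero m := ⟨by omega⟩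
  have hmodd : m % 2 = 1 := by
    have := Nat.odd_iff.mp hodd; omega
  -- the auxiliary model `Fin 2 ⊕ ZMod m`
  have hcardX : Fintype.card (Fin 2 ⊕ ZMod m) = Fintype.card (Fin n) := by
    simp [ZMod.card]; omega
  have φ : (Fin 2 ⊕ ZMod m) ≃ Fin n := Fintype.equivOfCardEq hcardX
  set π : Equiv.Perm (Fin 2 ⊕ ZMod m) :=
    Equiv.sumCongr (Equiv.swap (0 : Fin 2) 1) (Equiv.addLeft (1 : ZMod m)) with hπdef
  set g : Equiv.Perm (Fin n) := (φ.symm.trans π).trans φ with hgdef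
  obtain ⟨H, hH, k, hk⟩ := hδ.2 g
  set τ : Equiv.Perm (Fin n) := k * g * k⁻¹ with hτdef
  set k' : (Fin 2 ⊕ ZMod m) ≃ Fin n := φ.trans k with hk'def
  have hbase : ∀ x, τ (k' x) = k' (π x) := by
    intro x
    simp [hτdef, hk'def, hgdef, Equiv.Perm.mul_apply]
  have hpow : ∀ (j : ℕ) (x), (τ ^ j) (k' x) = k' ((π ^ j) x) := by
    intro j
    induction j with
    | zero => intro x; simp
    | succ j ih =>
        intro x
        calc (τ ^ (j + 1)) (k' x) = τ ((τ ^ j) (k' x)) := by rw [pow_succ']; rfl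
          _ = τ (k' ((π ^ j) x)) := by rw [ih]
          _ = k' (π ((π ^ j) x)) := hbase _
          _ = k' ((π ^ (j + 1)) x) := by rw [pow_succ']; rfl
  -- basic computations with π
  have hπ0 : π (Sum.inl 0) = Sum.inl 1 := by simp [hπdef]
  have hπ1 : π (Sum.inl 1) = Sum.inl 0 := by simp [hπdef]
  have hπr : ∀ z, π (Sum.inr z) = Sum.inr (1 + z) := by intro z; simp [hπdef]
  have hπr_pow : ∀ (j : ℕ) (z), (π ^ j) (Sum.inr z) = Sum.inr ((j : ZMod m) + z) := by
    intro j
    induction j with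
    | zero => intro z; simp
    | succ j ih =>
        intro z
        rw [pow_succ', Equiv.Perm.mul_apply, ih, hπr]
        congr 1
        push_cast
        ring
  have hπl_pow : ∀ (i : ℕ), ((π ^ (2 * i)) (Sum.inl 0) = Sum.inl 0 ∧
      (π ^ (2 * i)) (Sum.inl 1) = Sum.inl 1) := by
    intro i
    induction i with
    | zero => simp
    | succ i ih =>
        have h2 : 2 * (i + 1) = 2 * i + 1 + 1 := by ring
        constructor <;>
          rw [h2, pow_succ, pow_succ, Equiv.Perm.mul_apply, Equiv.Perm.mul_apply]
        · rw [hπ0, hπ1, ih.1]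
        · rw [hπ1, hπ0, ih.2]
  -- the key points
  set a0 : Fin n := k' (Sum.inl 0) with ha0
  set a1 : Fin n := k' (Sum.inl 1) with ha1
  set s : ZMod m → Fin n := fun z => k' (Sum.inr z) with hs
  have ha01 : a0 ≠ a1 := by
    rw [ha0, ha1]
    exact k'.injective.ne (by simp)
  have hsa0 : ∀ z, s z ≠ a0 := by
    intro z; rw [hs, ha0]; exact k'.injective.ne (by simp)
  have hsa1 : ∀ z, s z ≠ a1 := by
    intro z; rw [hs, ha1]; exact k'.injective.ne (by simp)
  have hsinj : ∀ z w, s z = s w → z = w := by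
    intro z w h
    have := k'.injective h
    exact Sum.inr.inj this
  have hsurj : ∀ y : Fin n, y = a0 ∨ y = a1 ∨ ∃ z, y = s z := by
    intro y
    obtain ⟨x, rfl⟩ := k'.surjective y
    rcases x with i | z
    · have : i = 0 ∨ i = 1 := by revert i; decide
      rcases this with rfl | rfl
      · exact Or.inl rfl
      · exact Or.inr (Or.inl rfl)
    · exact Or.inr (Or.inr ⟨z, rfl⟩)
  have hτa0 : τ a0 = a1 := by
    rw [ha0, ha1, hbase, hπ0]
  have hτa1 : τ a1 = a0 := by
    rw [ha0, ha1, hbase, hπ1]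
  have hta : ∀ j : ℕ, (τ ^ (2 * j)) a0 = a0 ∧ (τ ^ (2 * j)) a1 = a1 := by
    intro j
    rw [ha0, ha1, hpow, hpow, (hπl_pow j).1, (hπl_pow j).2]
    exact ⟨rfl, rfl⟩
  have hts : ∀ (j : ℕ) (z), (τ ^ j) (s z) = s ((j : ZMod m) + z) := by
    intro j z
    rw [hs]
    simp only []
    rw [hpow, hπr_pow]
  -- τ ^ m is the swap of a0 and a1
  obtain ⟨l, hl⟩ : ∃ l, m = 2 * l + 1 := ⟨m / 2, by omega⟩
  have htm : τ ^ m = Equiv.swap a0 a1 := by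
    apply Equiv.ext
    intro y
    rcases hsurj y with rfl | rfl | ⟨z, rfl⟩
    · rw [hl, pow_succ, Equiv.Perm.mul_apply, hτa0, (hta l).2, Equiv.swap_apply_left]
    · rw [hl, pow_succ, Equiv.Perm.mul_apply, hτa1, (hta l).1, Equiv.swap_apply_right]
    · rw [hts, ZMod.natCast_self, zero_add, Equiv.swap_apply_of_ne_of_ne (hsa0 z) (hsa1 z)]
  have hne : H ≠ ⊤ := (hmax H hH).1
  have ht : Equiv.swap a0 a1 ∈ H := htm ▸ pow_mem hk m
  -- 2 is invertible mod m
  obtain ⟨c2, hc2⟩ : ∃ c : ZMod m, 2 * c = 1 := by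
    refine ⟨((l + 1 : ℕ) : ZMod m), ?_⟩
    have h1 : ((2 * (l + 1) : ℕ) : ZMod m) = ((m + 1 : ℕ) : ZMod m) := by
      congr 1
      omega
    rw [Nat.cast_add, ZMod.natCast_self, zero_add, Nat.cast_one] at h1
    rw [← h1]
    push_cast
    ring
  have hcancel : ∀ d : ZMod m, 2 * d = 0 → d = 0 := by
    intro d hd
    have h1 : c2 * (2 * d) = 0 := by rw [hd, mul_zero]
    rwa [← mul_assoc, mul_comm c2 2, hc2, one_mul] at h1
  have hit : ∀ z w : ZMod m, ∃ j : ℕ, ((2 * j : ℕ) : ZMod m) + z = w := by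
    intro z w
    refine ⟨(c2 * (w - z)).val, ?_⟩
    have h1 : ((2 * (c2 * (w - z)).val : ℕ) : ZMod m)
        = 2 * (((c2 * (w - z)).val : ℕ) : ZMod m) := by push_cast; ring
    rw [h1, ZMod.natCast_rightInverse _, ← mul_assoc, hc2, one_mul]
    ring
  -- no swap (a0, s z) can lie in H
  have noswap : ∀ z, Equiv.swap a0 (s z) ∉ H := by
    intro z0 hz0
    apply hne
    have key : ∀ z, Equiv.swap a0 (s z) ∈ H := by
      intro z
      obtain ⟨j, hj⟩ := hit z0 z
      have h1 : τ ^ (2 * j) * Equiv.swap a0 (s z0) * (τ ^ (2 * j))⁻¹ ∈ H :=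
        mul_mem (mul_mem (pow_mem hk _) hz0) (inv_mem (pow_mem hk _))
      rwa [conj_swap', (hta j).1, hts, hj] at h1
    have hall : ∀ y, y ≠ a0 → Equiv.swap a0 y ∈ H := by
      intro y hy
      rcases hsurj y with rfl | rfl | ⟨z, rfl⟩
      · exact absurd rfl hy
      · exact ht
      · exact key z
    rw [eq_top_iff]
    intro p _
    refine Equiv.Perm.swap_induction_on p (one_mem H) fun f x y hxy hf => mul_mem ?_ hf
    by_cases hx : x = a0
    · subst hx
      exact hall y (Ne.symm hxy)
    · by_cases hy : y = a0
      · subst hy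
        rw [Equiv.swap_comm]
        exact hall x hx
      · have h2 := mul_mem (mul_mem (hall x hx) (hall y hy)) (inv_mem (hall x hx))
        rwa [conj_swap', Equiv.swap_apply_left,
          Equiv.swap_apply_of_ne_of_ne hy (Ne.symm hxy)] at h2
  -- every element of H maps a0 into {a0, a1}
  have key0 : ∀ h ∈ H, h a0 = a0 ∨ h a0 = a1 := by
    intro h hh
    by_contra hcon
    push_neg at hcon
    obtain ⟨hna0, hna1⟩ := hcon
    obtain ⟨z_a, hza⟩ : ∃ z, h a0 = s z := by
      rcases hsurj (h a0) with h' | h' | ⟨z, h'⟩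
      · exact absurd h' hna0
      · exact absurd h' hna1
      · exact ⟨z, h'⟩
    have hu : Equiv.swap (h a0) (h a1) ∈ H := by
      have h1 := mul_mem (mul_mem hh ht) (inv_mem hh)
      rwa [conj_swap'] at h1
    rcases hsurj (h a1) with h1 | h1 | ⟨z_b, h1⟩
    · rw [hza, h1, Equiv.swap_comm] at hu
      exact noswap z_a hu
    · rw [hza, h1] at hu
      have h2 := mul_mem (mul_mem ht hu) (inv_mem ht)
      rw [conj_swap', Equiv.swap_apply_of_ne_of_ne (hsa0 z_a) (hsa1 z_a),
        Equiv.swap_apply_right, Equiv.swap_comm] at h2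
      exact noswap z_a h2
    · rw [hza, h1] at hu
      set d : ZMod m := z_b - z_a with hd
      have hdne : d ≠ 0 := by
        intro h0
        have hzz : z_b = z_a := by
          have := sub_eq_zero.mp (hd ▸ h0)
          exact this
        apply ha01
        apply h.injective
        rw [hza, h1, hzz]
      have h2dne : (2 : ZMod m) * d ≠ 0 := fun h0 => hdne (hcancel d h0)
      have fam : ∀ z, Equiv.swap (s z) (s (z + d)) ∈ H := by
        intro z
        obtain ⟨j, hj⟩ := hit z_a z
        have hzbd : ((2 * j : ℕ) : ZMod m) + z_b = z + d := by
          rw [← hj, hd]; ring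
        have h3 := mul_mem (mul_mem (pow_mem hk (2 * j)) hu) (inv_mem (pow_mem hk (2 * j)))
        rwa [conj_swap', hts, hts, hj, hzbd] at h3
      have hv := fam (z_a + d)
      have hw := fam z_a
      have hne1 : s (z_a + d + d) ≠ s z_a := by
        intro he
        apply h2dne
        have h5 := hsinj _ _ he
        linear_combination h5
      have hne2 : s (z_a + d + d) ≠ s (z_a + d) := by
        intro he
        apply hdne
        have h5 := hsinj _ _ he
        linear_combination h5
      have h4 := mul_mem (mul_mem hw hv) (inv_mem hw)
      rw [conj_swap', Equiv.swap_apply_right,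
        Equiv.swap_apply_of_ne_of_ne hne1 hne2] at h4
      have h5 := mul_mem (mul_mem (inv_mem hh) h4) (inv_mem (inv_mem hh))
      rw [conj_swap'] at h5
      have e0 : h⁻¹ (s z_a) = a0 := by
        rw [← hza]
        exact h.symm_apply_apply a0
      rw [e0] at h5
      rcases hsurj (h⁻¹ (s (z_a + d + d))) with h6 | h6 | ⟨z', h6⟩
      · apply hne1
        have h7 := congrArg h h6
        rw [← Equiv.Perm.mul_apply, mul_inv_cancel, Equiv.Perm.one_apply, hza] at h7
        exact h7
      · apply hne2
        have h7 := congrArg h h6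
        rw [← Equiv.Perm.mul_apply, mul_inv_cancel, Equiv.Perm.one_apply, h1] at h7
        have h8 : z_b = z_a + d := by rw [hd]; ring
        rw [h8] at h7
        exact h7
      · rw [h6] at h5
        exact noswap z' h5
  have key1 : ∀ h ∈ H, h a1 = a0 ∨ h a1 = a1 := by
    intro h hh
    have h1 := key0 (h * Equiv.swap a0 a1) (mul_mem hh ht)
    rwa [Equiv.Perm.mul_apply, Equiv.swap_apply_left] at h1
  -- H stabilizes the pair {a0, a1}
  set A : Set (Fin n) := {a0, a1} with hA
  have hHsub : H ≤ MulAction.stabilizer (Equiv.Perm (Fin n)) A := by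
    intro h hh
    rw [MulAction.mem_stabilizer_iff]
    have himg : h • A = ({h a0, h a1} : Set (Fin n)) := by
      rw [hA, Set.smul_set_insert, Set.smul_set_singleton]
      rfl
    rw [himg, hA]
    rcases key0 h hh with h0 | h0 <;> rcases key1 h hh with h1 | h1
    · exact absurd (h.injective (h0.trans h1.symm)) ha01
    · rw [h0, h1]
    · rw [h0, h1]
      exact Set.pair_comm a1 a0
    · exact absurd (h.injective (h0.trans h1.symm)) ha01
  have hstabne : MulAction.stabilizer (Equiv.Perm (Fin n)) A ≠ ⊤ := by
    intro htop
    have hmem : Equiv.swap a0 (s 0) ∈ MulAction.stabilizer (Equiv.Perm (Fin n)) A := by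
      rw [htop]; exact Subgroup.mem_top _
    rw [MulAction.mem_stabilizer_iff] at hmem
    have h1 : Equiv.swap a0 (s 0) • a0 ∈ Equiv.swap a0 (s 0) • A :=
      Set.smul_mem_smul_set (by rw [hA]; exact Or.inl rfl)
    rw [hmem] at h1
    have h2 : s 0 ∈ A := by
      rwa [Equiv.Perm.smul_def, Equiv.swap_apply_left] at h1
    rw [hA] at h2
    rcases h2 with h2 | h2
    · exact hsa0 0 h2
    · exact hsa1 0 h2
  have hHeq : H = MulAction.stabilizer (Equiv.Perm (Fin n)) A := by
    rcases lt_or_eq_of_le hHsub with hlt | heq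
    · exact absurd ((hmax H hH).2 _ hlt) hstabne
    · exact heq
  -- build the conjugating permutation
  have h01 : (0 : Fin n) ≠ 1 := by
    intro h
    have h1 : (1 : Fin n).val = 1 := by
      rw [Fin.val_one']
      exact Nat.mod_eq_of_lt (by omega)
    rw [← h] at h1
    simp at h1
  obtain ⟨k₂, hk20, hk21⟩ : ∃ k₂ : Equiv.Perm (Fin n), k₂ 0 = a0 ∧ k₂ 1 = a1 := by
    by_cases hc : (1 : Fin n) = a0
    · refine ⟨Equiv.swap 0 a1 * Equiv.swap 0 1, ?_, ?_⟩
      · rw [Equiv.Perm.mul_apply, Equiv.swap_apply_left,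
          Equiv.swap_apply_of_ne_of_ne (Ne.symm h01) (hc ▸ ha01)]
        exact hc
      · rw [Equiv.Perm.mul_apply, Equiv.swap_apply_right, Equiv.swap_apply_left]
    · refine ⟨Equiv.swap 1 a1 * Equiv.swap 0 a0, ?_, ?_⟩
      · rw [Equiv.Perm.mul_apply, Equiv.swap_apply_left,
          Equiv.swap_apply_of_ne_of_ne (fun h => hc h.symm) ha01]
      · rw [Equiv.Perm.mul_apply,
          Equiv.swap_apply_of_ne_of_ne (Ne.symm h01) hc, Equiv.swap_apply_left]
  -- identify the canonical two-element set
  have hM : ({a : Fin n | (a : ℕ) < 2} : Set (Fin n)) = {0, 1} := by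
    ext x
    simp only [Set.mem_setOf_eq, Set.mem_insert_iff, Set.mem_singleton_iff]
    rw [Fin.ext_iff, Fin.ext_iff, Fin.val_zero, Fin.val_one']
    have h1n : 1 % n = 1 := Nat.mod_eq_of_lt (by omega)
    rw [h1n]
    omega
  have hsmul : k₂ • ({a : Fin n | (a : ℕ) < 2} : Set (Fin n)) = A := by
    rw [hM, Set.smul_set_insert, Set.smul_set_singleton, hA]
    simp [Equiv.Perm.smul_def, hk20, hk21]
  refine ⟨H, hH, k₂, ?_⟩
  rw [hHeq, ← hsmul, MulAction.stabilizer_smul_eq_stabilizer_map_conj]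
  rfl
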